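/- arXiv:1011.4424 — 2 statements merged into one kernel-verified Lean document; each statement's English description precedes it below -/
import Mathlib

section
/- Let H and H̃ be Hermitian positive definite n×n matrices such that |x*(H - H̃)y| ≤ F √(x*Hx · y*Hy) for all x, y and some constant 0 ≤ F < 1. Then for all x, y, |x*(H̃^{-1} - H^{-1})y| ≤ (F/(1-F)) √(x*H^{-1}x · y*H^{-1}y). -/
open Matrix
open scoped ComplexOrder InnerProductSpace

noncomputable def specNorm {n : Type*} [Fintype n] [DecidableEq n] (A : Matrix n n ℂ) : ℝ :=
  ‖Matrix.toEuclideanCLM (𝕜 := ℂ) A‖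

noncomputable def frobNorm {m k : Type*} [Fintype m] [Fintype k] (A : Matrix m k ℂ) : ℝ :=
  Real.sqrt (∑ i, ∑ j, ‖A i j‖ ^ 2)

noncomputable def psqrt {n : Type*} [Fintype n] [DecidableEq n] {A : Matrix n n ℂ}
    (hA : A.PosDef) : Matrix n n ℂ :=
  hA.posSemidef.1.eigenvectorUnitary.1 * diagonal ((↑) ∘ (√·) ∘ hA.posSemidef.1.eigenvalues) *
    (star hA.posSemidef.1.eigenvectorUnitary : Matrix n n ℂ)

namespace Stmt3Aux

variable {n : ℕ}

lemma psqrt_herm (A : Matrix (Fin n) (Fin n) ℂ) (hA : A.PosDef) : (psqrt hA)ᴴ = psqrt hA := by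
  simp [psqrt, conjTranspose_mul, mul_assoc, diagonal_conjTranspose]
  congr 2
  · ext i j; simp
  · congr 1; funext i; simp [Pi.star_apply]

lemma psqrt_mul_self (A : Matrix (Fin n) (Fin n) ℂ) (hA : A.PosDef) : psqrt hA * psqrt hA = A := by
  have hs := hA.posSemidef.1.spectral_theorem
  conv_rhs => rw [hs]
  rw [Unitary.conjStarAlgAut_apply]
  simp only [psqrt]
  have hU := Unitary.coe_star_mul_self hA.posSemidef.1.eigenvectorUnitary
  have hD : diagonal ((↑) ∘ (√·) ∘ hA.posSemidef.1.eigenvalues) *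
      diagonal ((↑) ∘ (√·) ∘ hA.posSemidef.1.eigenvalues) =
      diagonal (RCLike.ofReal ∘ hA.posSemidef.1.eigenvalues : Fin n → ℂ) := by
    rw [diagonal_mul_diagonal]
    congr 1; ext i
    simp only [Function.comp_apply]
    rw [← Complex.ofReal_mul, Real.mul_self_sqrt (hA.posSemidef.eigenvalues_nonneg i)]
    rfl
  calc _ = (hA.posSemidef.1.eigenvectorUnitary.1 * diagonal ((↑) ∘ (√·) ∘ hA.posSemidef.1.eigenvalues)) *
      ((star hA.posSemidef.1.eigenvectorUnitary : Matrix (Fin n) (Fin n) ℂ) * hA.posSemidef.1.eigenvectorUnitary.1) *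
      (diagonal ((↑) ∘ (√·) ∘ hA.posSemidef.1.eigenvalues) * (star hA.posSemidef.1.eigenvectorUnitary : Matrix (Fin n) (Fin n) ℂ)) := by
        simp only [mul_assoc]
    _ = _ := by rw [hU, mul_one, mul_assoc, ← mul_assoc (diagonal _), hD, ← mul_assoc]

noncomputable def ev (u : Fin n → ℂ) : EuclideanSpace ℂ (Fin n) := (WithLp.equiv 2 _).symm u

lemma inner_ev (A : Matrix (Fin n) (Fin n) ℂ) (u v : Fin n → ℂ) :
    ⟪ev u, toEuclideanCLM (𝕜 := ℂ) (n := Fin n) A (ev v)⟫_ℂ = star u ⬝ᵥ (A *ᵥ v) := by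
  rw [ev, ev, WithLp.equiv_symm_apply, toEuclideanCLM_toLp, EuclideanSpace.inner_toLp_toLp, dotProduct_comm]

lemma apply_ev (A : Matrix (Fin n) (Fin n) ℂ) (v : Fin n → ℂ) :
    toEuclideanCLM (𝕜 := ℂ) (n := Fin n) A (ev v) = ev (A *ᵥ v) := by
  rw [ev, ev, WithLp.equiv_symm_apply, toEuclideanCLM_toLp]

lemma norm_ev_sq (u : Fin n → ℂ) : ‖ev (n := n) u‖ ^ 2 = (star u ⬝ᵥ u).re := by
  have h := inner_self_eq_norm_sq (𝕜 := ℂ) (ev (n := n) u)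
  rw [← h]
  have h2 : ⟪ev (n := n) u, ev u⟫_ℂ = star u ⬝ᵥ u := by
    rw [ev, WithLp.equiv_symm_apply, EuclideanSpace.inner_toLp_toLp, dotProduct_comm]
  rw [h2]
  rfl

lemma conj_dot (S A : Matrix (Fin n) (Fin n) ℂ) (hS : Sᴴ = S) (u v : Fin n → ℂ) :
    star u ⬝ᵥ ((S * A * S) *ᵥ v) = star (S *ᵥ u) ⬝ᵥ (A *ᵥ (S *ᵥ v)) := by
  rw [star_mulVec, hS, ← mulVec_mulVec, ← mulVec_mulVec, dotProduct_mulVec]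

end Stmt3Aux

open Stmt3Aux

theorem stmt_3 {n : ℕ} (H Ht : Matrix (Fin n) (Fin n) ℂ)
    (hH : H.PosDef) (hHt : Ht.PosDef) (F : ℝ) (hF0 : 0 ≤ F) (hF1 : F < 1)
    (hbound : ∀ x y : Fin n → ℂ,
      ‖star x ⬝ᵥ ((H - Ht) *ᵥ y)‖ ≤
        F * Real.sqrt ((star x ⬝ᵥ (H *ᵥ x)).re * (star y ⬝ᵥ (H *ᵥ y)).re)) :
    ∀ x y : Fin n → ℂ,
      ‖star x ⬝ᵥ ((Ht⁻¹ - H⁻¹) *ᵥ y)‖ ≤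
        (F / (1 - F)) *
          Real.sqrt ((star x ⬝ᵥ (H⁻¹ *ᵥ x)).re * (star y ⬝ᵥ (H⁻¹ *ᵥ y)).re) := by
  intro x y
  set S : Matrix (Fin n) (Fin n) ℂ := psqrt hH.inv with hSdef
  have hSH : Sᴴ = S := psqrt_herm _ hH.inv
  have hSS : S * S = H⁻¹ := psqrt_mul_self _ hH.inv
  have hHunit : IsUnit H.det := hH.det_pos.ne'.isUnit
  have hHtunit : IsUnit Ht.det := hHt.det_pos.ne'.isUnit
  have hHinv : H⁻¹ * H = 1 := nonsing_inv_mul H hHunit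
  have hHinv' : H * H⁻¹ = 1 := mul_nonsing_inv H hHunit
  have hcomm0 : S * H⁻¹ = H⁻¹ * S := by rw [← hSS, ← mul_assoc]
  have hcomm : H * S = S * H := by
    have h0 := congrArg (fun X => H * X * H) hcomm0
    have l : H * (S * H⁻¹) * H = H * S := by
      rw [← mul_assoc, mul_assoc (H * S) H⁻¹ H, hHinv, mul_one]
    have r : H * (H⁻¹ * S) * H = S * H := by
      rw [← mul_assoc, hHinv', one_mul]
    rw [l, r] at h0
    exact h0
  have hSHS : S * H * S = 1 := by
    rw [← hcomm, mul_assoc, hSS, hHinv']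
  set M := S * Ht * S with hM
  have hMH : Mᴴ = M := by
    rw [hM]
    have ht : Htᴴ = Ht := hHt.1
    simp [conjTranspose_mul, hSH, ht, mul_assoc]
  have hSdet : IsUnit S.det := by
    have h1 : IsUnit (S.det * S.det) := by
      rw [← det_mul, hSS]; exact (hH.inv).det_pos.ne'.isUnit
    exact isUnit_of_mul_isUnit_left h1
  have hSinv : S * S⁻¹ = 1 := mul_nonsing_inv S hSdet
  have hSinv' : S⁻¹ * S = 1 := nonsing_inv_mul S hSdet
  have hMdet : IsUnit M.det := by
    rw [hM, det_mul, det_mul]; exact (hSdet.mul hHtunit).mul hSdet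
  have hMinv : M * M⁻¹ = 1 := mul_nonsing_inv M hMdet
  have hMinv' : M⁻¹ * M = 1 := nonsing_inv_mul M hMdet
  have hMinvEq : S * M⁻¹ * S = Ht⁻¹ := by
    rw [hM, Matrix.mul_inv_rev, Matrix.mul_inv_rev]
    have assoc : S * (S⁻¹ * (Ht⁻¹ * S⁻¹)) * S = (S * S⁻¹) * Ht⁻¹ * (S⁻¹ * S) := by
      noncomm_ring
    rw [assoc, hSinv, hSinv', one_mul, mul_one]
  have hOneSub : (1 : Matrix (Fin n) (Fin n) ℂ) - M = S * (H - Ht) * S := by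
    rw [hM, mul_sub, sub_mul, hSHS]
  have hDiff : Ht⁻¹ - H⁻¹ = S * (M⁻¹ - 1) * S := by
    rw [mul_sub, sub_mul, hMinvEq, mul_one, hSS]
  -- norm of ε (1 - M)
  have hbound2 : ∀ u v : Fin n → ℂ,
      ‖star u ⬝ᵥ ((1 - M) *ᵥ v)‖ ≤ F * (‖ev u‖ * ‖ev v‖) := by
    intro u v
    rw [hOneSub, conj_dot S (H - Ht) hSH]
    refine (hbound (S *ᵥ u) (S *ᵥ v)).trans ?_
    have h1 : star (S *ᵥ u) ⬝ᵥ (H *ᵥ (S *ᵥ u)) = star u ⬝ᵥ u := by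
      rw [← conj_dot S H hSH, hSHS, one_mulVec]
    have h2 : star (S *ᵥ v) ⬝ᵥ (H *ᵥ (S *ᵥ v)) = star v ⬝ᵥ v := by
      rw [← conj_dot S H hSH, hSHS, one_mulVec]
    rw [h1, h2, ← norm_ev_sq, ← norm_ev_sq, ← mul_pow,
      Real.sqrt_sq (by positivity)]
  have hA1 : ‖toEuclideanCLM (𝕜 := ℂ) (n := Fin n) (1 - M)‖ ≤ F := by
    refine ContinuousLinearMap.opNorm_le_bound _ hF0 fun w => ?_
    obtain ⟨v, rfl⟩ : ∃ v, ev v = w := ⟨WithLp.equiv 2 _ w, (WithLp.equiv 2 _).symm_apply_apply w⟩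
    rw [apply_ev]
    set u := (1 - M) *ᵥ v with hu
    rcases eq_or_ne (‖ev (n := n) u‖) 0 with h0 | h0
    · rw [h0]; positivity
    · have hpos : 0 < ‖ev (n := n) u‖ := lt_of_le_of_ne (norm_nonneg _) (Ne.symm h0)
      have key : ‖ev (n := n) u‖ ^ 2 ≤ F * (‖ev u‖ * ‖ev v‖) := by
        calc ‖ev (n := n) u‖ ^ 2 = (star u ⬝ᵥ u).re := norm_ev_sq u
          _ ≤ ‖star u ⬝ᵥ u‖ := Complex.re_le_norm _
          _ = ‖star u ⬝ᵥ ((1 - M) *ᵥ v)‖ := by rw [← hu]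
          _ ≤ F * (‖ev u‖ * ‖ev v‖) := hbound2 u v
      nlinarith [norm_nonneg (ev (n := n) v)]
  -- norm of ε M⁻¹ - 1
  have hεinv' : toEuclideanCLM (𝕜 := ℂ) (n := Fin n) M * toEuclideanCLM (𝕜 := ℂ) (n := Fin n) M⁻¹ = 1 := by
    rw [← _root_.map_mul, hMinv, _root_.map_one]
  have hBeq : toEuclideanCLM (𝕜 := ℂ) (n := Fin n) M⁻¹ - 1 =
      toEuclideanCLM (𝕜 := ℂ) (n := Fin n) (1 - M) * toEuclideanCLM (𝕜 := ℂ) (n := Fin n) M⁻¹ := by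
    rw [← _root_.map_mul]
    have h : (1 - M) * M⁻¹ = M⁻¹ - 1 := by rw [sub_mul, one_mul, hMinv]
    rw [h, map_sub, _root_.map_one]
  have h2 : ‖toEuclideanCLM (𝕜 := ℂ) (n := Fin n) M⁻¹ - 1‖ ≤ F * ‖toEuclideanCLM (𝕜 := ℂ) (n := Fin n) M⁻¹‖ := by
    rw [hBeq]
    exact (norm_mul_le _ _).trans (mul_le_mul_of_nonneg_right hA1 (norm_nonneg _))
  have hnB : ‖toEuclideanCLM (𝕜 := ℂ) (n := Fin n) M⁻¹‖ ≤ 1 / (1 - F) := by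
    have h1 : ‖toEuclideanCLM (𝕜 := ℂ) (n := Fin n) M⁻¹‖ ≤ 1 + ‖toEuclideanCLM (𝕜 := ℂ) (n := Fin n) M⁻¹ - 1‖ := by
      have := norm_add_le (1 : EuclideanSpace ℂ (Fin n) →L[ℂ] EuclideanSpace ℂ (Fin n))
        (toEuclideanCLM (𝕜 := ℂ) (n := Fin n) M⁻¹ - 1)
      simp only [add_sub_cancel] at this
      refine this.trans ?_
      have hone : ‖(1 : EuclideanSpace ℂ (Fin n) →L[ℂ] EuclideanSpace ℂ (Fin n))‖ ≤ 1 :=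
        ContinuousLinearMap.norm_id_le
      linarith
    rw [le_div_iff₀ (by linarith)]
    nlinarith
  have hn : ‖toEuclideanCLM (𝕜 := ℂ) (n := Fin n) M⁻¹ - 1‖ ≤ F / (1 - F) := by
    refine h2.trans ?_
    rw [div_eq_mul_one_div]
    exact mul_le_mul_of_nonneg_left hnB hF0
  -- assemble
  have hxa : ‖ev (S *ᵥ x)‖ ^ 2 = (star x ⬝ᵥ (H⁻¹ *ᵥ x)).re := by
    rw [norm_ev_sq]
    congr 1
    have h := conj_dot S 1 hSH x x
    rw [mul_one, hSS, one_mulVec] at h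
    exact h.symm
  have hya : ‖ev (S *ᵥ y)‖ ^ 2 = (star y ⬝ᵥ (H⁻¹ *ᵥ y)).re := by
    rw [norm_ev_sq]
    congr 1
    have h := conj_dot S 1 hSH y y
    rw [mul_one, hSS, one_mulVec] at h
    exact h.symm
  have hsqrt : Real.sqrt ((star x ⬝ᵥ (H⁻¹ *ᵥ x)).re * (star y ⬝ᵥ (H⁻¹ *ᵥ y)).re)
      = ‖ev (S *ᵥ x)‖ * ‖ev (S *ᵥ y)‖ := by
    rw [← hxa, ← hya, ← mul_pow, Real.sqrt_sq (by positivity)]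
  rw [hDiff, conj_dot S (M⁻¹ - 1) hSH, hsqrt]
  have hfin : ‖star (S *ᵥ x) ⬝ᵥ ((M⁻¹ - 1) *ᵥ (S *ᵥ y))‖
      ≤ ‖toEuclideanCLM (𝕜 := ℂ) (n := Fin n) M⁻¹ - 1‖ * (‖ev (S *ᵥ x)‖ * ‖ev (S *ᵥ y)‖) := by
    rw [← inner_ev]
    have hmap : toEuclideanCLM (𝕜 := ℂ) (n := Fin n) (M⁻¹ - 1) = toEuclideanCLM (𝕜 := ℂ) (n := Fin n) M⁻¹ - 1 := by
      rw [_root_.map_sub, _root_.map_one]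
    rw [hmap]
    calc ‖⟪ev (S *ᵥ x), (toEuclideanCLM (𝕜 := ℂ) (n := Fin n) M⁻¹ - 1) (ev (S *ᵥ y))⟫_ℂ‖
        ≤ ‖ev (S *ᵥ x)‖ * ‖(toEuclideanCLM (𝕜 := ℂ) (n := Fin n) M⁻¹ - 1) (ev (S *ᵥ y))‖ :=
          norm_inner_le_norm _ _
      _ ≤ ‖ev (S *ᵥ x)‖ * (‖toEuclideanCLM (𝕜 := ℂ) (n := Fin n) M⁻¹ - 1‖ * ‖ev (S *ᵥ y)‖) := by
          refine mul_le_mul_of_nonneg_left (ContinuousLinearMap.le_opNorm _ _) (norm_nonneg _)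
      _ = ‖toEuclideanCLM (𝕜 := ℂ) (n := Fin n) M⁻¹ - 1‖ * (‖ev (S *ᵥ x)‖ * ‖ev (S *ᵥ y)‖) := by ring
  refine hfin.trans ?_
  have hFF : 0 ≤ F / (1 - F) := div_nonneg hF0 (by linarith)
  exact mul_le_mul_of_nonneg_right hn (by positivity)
end

section
/- Let M be Hermitian positive definite and δM Hermitian with η := ‖M^{-1/2} δM M^{-1/2}‖₂ < 1/2. If X̃ ∈ ℂ^{n×n} satisfies X̃*(M+δM)X̃ = I, then for any n×k submatrix X̃₁ of X̃ (columns), the matrix I − X̃₁* δM X̃₁ is positive definite and ‖(I − X̃₁* δM X̃₁)^{-1/2}‖₂ ≤ √(1−η)/√(1−2η). -/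
open Matrix
open scoped ComplexOrder

lemma psqrt_mul_self {n : Type*} [Fintype n] [DecidableEq n] {A : Matrix n n ℂ}
    (hA : A.PosDef) : psqrt hA * psqrt hA = A := by
  have hD : diagonal (((↑) ∘ (√·) ∘ hA.posSemidef.1.eigenvalues : n → ℂ)) *
      diagonal ((↑) ∘ (√·) ∘ hA.posSemidef.1.eigenvalues) =
      diagonal (RCLike.ofReal ∘ hA.posSemidef.1.eigenvalues) := by
    rw [diagonal_mul_diagonal]
    congr 1
    funext i
    simp only [Function.comp_apply]
    rw [← Complex.ofReal_mul, Real.mul_self_sqrt (hA.posSemidef.eigenvalues_nonneg i)]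
    rfl
  conv_rhs => rw [hA.posSemidef.1.spectral_theorem, Unitary.conjStarAlgAut_apply]
  simp only [psqrt, Matrix.mul_assoc]
  rw [← Matrix.mul_assoc (star _ : Matrix n n ℂ) _ _, Unitary.coe_star_mul_self, Matrix.one_mul,
    ← Matrix.mul_assoc _ _ (star _ : Matrix n n ℂ), hD]

lemma psqrt_conjTranspose {n : Type*} [Fintype n] [DecidableEq n] {A : Matrix n n ℂ}
    (hA : A.PosDef) : (psqrt hA)ᴴ = psqrt hA := by
  have hs : ∀ g : n → ℝ, star (Complex.ofReal ∘ g) = Complex.ofReal ∘ g := fun g => by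
    funext i; simp
  simp only [psqrt, conjTranspose_mul, Matrix.mul_assoc, diagonal_conjTranspose,
    star_eq_conjTranspose, conjTranspose_conjTranspose, hs]

section Aux

open scoped InnerProductSpace

lemma congr_dot {n k : ℕ} (A : Matrix (Fin n) (Fin n) ℂ) (C : Matrix (Fin n) (Fin k) ℂ)
    (v : Fin k → ℂ) :
    star v ⬝ᵥ (Cᴴ * A * C) *ᵥ v = star (C *ᵥ v) ⬝ᵥ A *ᵥ (C *ᵥ v) := by
  rw [star_mulVec, ← Matrix.mulVec_mulVec, ← Matrix.mulVec_mulVec, dotProduct_mulVec]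

lemma submatrix_congr {n k : ℕ} (X : Matrix (Fin n) (Fin n) ℂ) (A : Matrix (Fin n) (Fin n) ℂ)
    (f : Fin k → Fin n) :
    (X.submatrix id f)ᴴ * A * X.submatrix id f = (Xᴴ * A * X).submatrix f f := by
  ext i j
  simp [Matrix.mul_apply, Finset.sum_mul]

lemma norm_sq_eq {k : ℕ} (z : Fin k → ℂ) :
    ‖(WithLp.equiv 2 (Fin k → ℂ)).symm z‖ ^ 2 = (star z ⬝ᵥ z).re := by
  rw [WithLp.equiv_symm_apply, ← @inner_self_eq_norm_sq ℂ, EuclideanSpace.inner_toLp_toLp,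
    dotProduct_comm]
  rfl

lemma re_dot_le {k : ℕ} (A : Matrix (Fin k) (Fin k) ℂ) (z : Fin k → ℂ) :
    (star z ⬝ᵥ A *ᵥ z).re ≤ specNorm A * (star z ⬝ᵥ z).re := by
  set z' := (WithLp.equiv 2 (Fin k → ℂ)).symm z with hz'
  have h1 : (⟪z', Matrix.toEuclideanCLM (𝕜 := ℂ) A z'⟫_ℂ) = star z ⬝ᵥ A *ᵥ z := by
    rw [hz', WithLp.equiv_symm_apply, Matrix.toEuclideanCLM_toLp, EuclideanSpace.inner_toLp_toLp,
      dotProduct_comm]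
  have h2 : (star z ⬝ᵥ z).re = ‖z'‖ ^ 2 := (norm_sq_eq z).symm
  calc (star z ⬝ᵥ A *ᵥ z).re = (⟪z', Matrix.toEuclideanCLM (𝕜 := ℂ) A z'⟫_ℂ).re := by rw [h1]
    _ ≤ ‖⟪z', Matrix.toEuclideanCLM (𝕜 := ℂ) A z'⟫_ℂ‖ := Complex.re_le_norm _
    _ ≤ ‖z'‖ * ‖Matrix.toEuclideanCLM (𝕜 := ℂ) A z'‖ := norm_inner_le_norm _ _
    _ ≤ ‖z'‖ * (‖Matrix.toEuclideanCLM (𝕜 := ℂ) A‖ * ‖z'‖) := by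
        gcongr; exact (Matrix.toEuclideanCLM (𝕜 := ℂ) A).le_opNorm z'
    _ = specNorm A * (star z ⬝ᵥ z).re := by rw [h2, specNorm]; ring

lemma psqrt_det_isUnit {n : ℕ} {A : Matrix (Fin n) (Fin n) ℂ} (hA : A.PosDef) :
    IsUnit (psqrt hA).det := by
  have h : (psqrt hA) * (psqrt hA) = A := psqrt_mul_self hA
  have hd : (psqrt hA).det * (psqrt hA).det = A.det := by rw [← Matrix.det_mul, h]
  have hA0 : A.det ≠ 0 := by
    have := hA.det_pos
    exact_mod_cast (by exact_mod_cast this.ne' : A.det ≠ 0)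
  refine isUnit_iff_ne_zero.mpr fun h0 => hA0 ?_
  rw [← hd, h0, mul_zero]

end Aux

theorem stmt_10 {n kk : ℕ} (M δM : Matrix (Fin n) (Fin n) ℂ)
    (hM : M.PosDef) (hδ : δM.IsHermitian) (hMt : (M + δM).PosDef)
    (η : ℝ) (hη : η = specNorm ((psqrt hM)⁻¹ * δM * (psqrt hM)⁻¹)) (hhalf : η < 1 / 2)
    (Xt : Matrix (Fin n) (Fin n) ℂ) (hXt : Xtᴴ * (M + δM) * Xt = 1)
    (f : Fin kk → Fin n) (hf : Function.Injective f) :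
    ∃ hB : ((1 : Matrix (Fin kk) (Fin kk) ℂ) -
        (Xt.submatrix id f)ᴴ * δM * Xt.submatrix id f).PosDef,
      specNorm (psqrt hB)⁻¹ ≤ Real.sqrt (1 - η) / Real.sqrt (1 - 2 * η) := by
  classical
  have hη0 : 0 ≤ η := by rw [hη, specNorm]; exact norm_nonneg _
  set X₁ := Xt.submatrix id f with hX₁
  have h1 : X₁ᴴ * (M + δM) * X₁ = 1 := by
    rw [hX₁, submatrix_congr, hXt]
    ext i j
    simp [Matrix.one_apply, hf.eq_iff]
  have hBeq : (1 : Matrix (Fin kk) (Fin kk) ℂ) - X₁ᴴ * δM * X₁ = X₁ᴴ * M * X₁ := by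
    rw [← h1, Matrix.mul_add, Matrix.add_mul]; abel
  -- square root of M
  set R := psqrt hM with hRdef
  have hRH : Rᴴ = R := psqrt_conjTranspose hM
  have hRR : R * R = M := psqrt_mul_self hM
  have hRu : IsUnit R.det := psqrt_det_isUnit hM
  have hRinv : R * R⁻¹ = 1 := Matrix.mul_nonsing_inv _ hRu
  have hRinv' : R⁻¹ * R = 1 := Matrix.nonsing_inv_mul _ hRu
  set W := R⁻¹ * δM * R⁻¹ with hWdef
  have hW : Rᴴ * W * R = δM := by
    rw [hRH, hWdef]
    calc R * (R⁻¹ * δM * R⁻¹) * R = (R * R⁻¹) * δM * (R⁻¹ * R) := by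
          simp only [Matrix.mul_assoc]
      _ = δM := by rw [hRinv, hRinv', one_mul, mul_one]
  have hM2 : Rᴴ * (1 : Matrix (Fin n) (Fin n) ℂ) * R = M := by rw [hRH, mul_one, hRR]
  -- the key quadratic-form inequality
  have key : ∀ v : Fin kk → ℂ,
      (star v ⬝ᵥ v).re ≤ (1 + η) * (star v ⬝ᵥ (X₁ᴴ * M * X₁) *ᵥ v).re := by
    intro v
    set y := X₁ *ᵥ v with hy
    have e1 : star v ⬝ᵥ v = star y ⬝ᵥ (M + δM) *ᵥ y := by
      have h := congr_dot (M + δM) X₁ v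
      rw [h1, Matrix.one_mulVec] at h
      exact h
    set z := R *ᵥ y with hz
    have eM : star y ⬝ᵥ M *ᵥ y = star z ⬝ᵥ z := by
      have h := congr_dot (1 : Matrix (Fin n) (Fin n) ℂ) R y
      rw [hM2, Matrix.one_mulVec] at h
      exact h
    have eδ : star y ⬝ᵥ δM *ᵥ y = star z ⬝ᵥ W *ᵥ z := by
      have h := congr_dot W R y
      rw [hW] at h
      exact h
    have hre : (star z ⬝ᵥ W *ᵥ z).re ≤ η * (star z ⬝ᵥ z).re := by
      rw [hη]; exact re_dot_le W z
    have e2 : star v ⬝ᵥ (X₁ᴴ * M * X₁) *ᵥ v = star z ⬝ᵥ z := by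
      rw [congr_dot, ← hy, eM]
    rw [e1, add_mulVec, dotProduct_add, Complex.add_re, eM, eδ, e2]
    nlinarith [hre]
  have h1η : (0:ℝ) < 1 + η := by linarith
  -- mulVec injectivity
  have hposv : ∀ v : Fin kk → ℂ, v ≠ 0 → X₁ *ᵥ v ≠ 0 := by
    intro v hv hy0
    have hk := key v
    have e2 : star v ⬝ᵥ (X₁ᴴ * M * X₁) *ᵥ v = 0 := by
      rw [congr_dot, hy0]
      simp
    rw [e2] at hk
    have hv' : (WithLp.equiv 2 (Fin kk → ℂ)).symm v ≠ 0 := by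
      intro h
      exact hv ((WithLp.equiv 2 (Fin kk → ℂ)).symm.injective (h.trans rfl))
    have : 0 < (star v ⬝ᵥ v).re := by
      rw [← norm_sq_eq]
      exact pow_pos (norm_pos_iff.mpr hv') 2
    simp at hk
    linarith
  -- positive definiteness
  have hB : ((1 : Matrix (Fin kk) (Fin kk) ℂ) - X₁ᴴ * δM * X₁).PosDef := by
    refine Matrix.PosDef.of_dotProduct_mulVec_pos ?_ ?_
    · have : ((1 : Matrix (Fin kk) (Fin kk) ℂ) - X₁ᴴ * δM * X₁)ᴴ
          = 1 - X₁ᴴ * δM * X₁ := by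
        simp [conjTranspose_sub, conjTranspose_mul, hδ.eq, Matrix.mul_assoc]
      exact this
    · intro v hv
      rw [hBeq, congr_dot]
      exact hM.dotProduct_mulVec_pos (hposv v hv)
  refine ⟨hB, ?_⟩
  -- square root of B
  set S := psqrt hB with hSdef
  have hSH : Sᴴ = S := psqrt_conjTranspose hB
  have hSS : S * S = (1 : Matrix (Fin kk) (Fin kk) ℂ) - X₁ᴴ * δM * X₁ :=
    psqrt_mul_self hB
  have hSu : IsUnit S.det := psqrt_det_isUnit hB
  have hSinv : S * S⁻¹ = 1 := Matrix.mul_nonsing_inv _ hSu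
  have hB2 : Sᴴ * (1 : Matrix (Fin kk) (Fin kk) ℂ) * S = X₁ᴴ * M * X₁ := by
    rw [hSH, mul_one, hSS, hBeq]
  -- first bound: specNorm S⁻¹ ≤ √(1+η)
  have hbound : specNorm S⁻¹ ≤ Real.sqrt (1 + η) := by
    rw [specNorm]
    refine ContinuousLinearMap.opNorm_le_bound _ (by positivity) fun x => ?_
    set y := Matrix.toEuclideanCLM (𝕜 := ℂ) S⁻¹ x with hydef
    have hxy : Matrix.toEuclideanCLM (𝕜 := ℂ) S y = x := by
      rw [hydef]
      calc Matrix.toEuclideanCLM (𝕜 := ℂ) S (Matrix.toEuclideanCLM (𝕜 := ℂ) S⁻¹ x)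
          = (Matrix.toEuclideanCLM (𝕜 := ℂ) S * Matrix.toEuclideanCLM (𝕜 := ℂ) S⁻¹) x := rfl
        _ = Matrix.toEuclideanCLM (𝕜 := ℂ) (S * S⁻¹) x := by rw [← _root_.map_mul]
        _ = x := by rw [hSinv, _root_.map_one, ContinuousLinearMap.one_apply]
    set w := WithLp.equiv 2 (Fin kk → ℂ) y with hwdef
    have hyw : y = (WithLp.equiv 2 (Fin kk → ℂ)).symm w := by
      rw [hwdef, Equiv.symm_apply_apply]
    have hny : ‖y‖ ^ 2 = (star w ⬝ᵥ w).re := by rw [hyw, norm_sq_eq]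
    have hnx : ‖x‖ ^ 2 = (star w ⬝ᵥ ((1 : Matrix (Fin kk) (Fin kk) ℂ) - X₁ᴴ * δM * X₁) *ᵥ w).re := by
      have hx2 : x = (WithLp.equiv 2 (Fin kk → ℂ)).symm (S *ᵥ w) := by
        rw [← hxy, hyw, WithLp.equiv_symm_apply, Matrix.toEuclideanCLM_toLp]
      rw [hx2, norm_sq_eq]
      have h := congr_dot (1 : Matrix (Fin kk) (Fin kk) ℂ) S w
      rw [hB2, Matrix.one_mulVec, ← hBeq] at h
      rw [← h]
    have hineq : ‖y‖ ^ 2 ≤ (1 + η) * ‖x‖ ^ 2 := by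
      rw [hny, hnx, hBeq]
      exact key w
    calc ‖y‖ = Real.sqrt (‖y‖ ^ 2) := (Real.sqrt_sq (norm_nonneg _)).symm
      _ ≤ Real.sqrt ((1 + η) * ‖x‖ ^ 2) := Real.sqrt_le_sqrt hineq
      _ = Real.sqrt (1 + η) * ‖x‖ := by
          rw [Real.sqrt_mul (by linarith), Real.sqrt_sq (norm_nonneg _)]
  refine hbound.trans ?_
  -- arithmetic: √(1+η) ≤ √(1-η)/√(1-2η)
  have h2η : (0:ℝ) < 1 - 2 * η := by linarith
  rw [← Real.sqrt_div (by linarith : (0:ℝ) ≤ 1 - η)]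
  apply Real.sqrt_le_sqrt
  rw [le_div_iff₀ h2η]
  nlinarith
end
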